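/- Fix non-negative integers v1', v2' with 0 < v1' + v2' ≤ b. Then the double sum J1 = Σ_{0 ≤ v1 ≤ v1', 0 ≤ v2 ≤ v2'} (−1)^{v1+v2} v^{(v1'+v2'−1)(v1−v2)} [b choose v1][b choose v2][b−v2'−v1 choose v1'−v1][b−v1'−v2 choose v2'−v2] equals (−1)^{v1'+v2'} v^{b(v1'−v2')} [v1'+v2'−1 choose v1'][v1'+v2'−1 choose v2']. -/

import Mathlib

noncomputable section

/-- The indeterminate `v`. -/
def v : RatFunc ℚ := RatFunc.X

/-- Quantum integer `[r] = (v^r - v^{-r})/(v - v⁻¹)`. -/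
def qint (r : ℤ) : RatFunc ℚ := (v ^ r - v ^ (-r)) / (v - v⁻¹)

/-- Quantum factorial `[n]!`. -/
def qfact (n : ℕ) : RatFunc ℚ := ∏ i ∈ Finset.range n, qint ((i : ℤ) + 1)

/-- Gaussian binomial coefficient `[m choose r]`, zero for `r < 0`. -/
def qbinom (m r : ℤ) : RatFunc ℚ :=
  if r < 0 then 0
  else (∏ i ∈ Finset.range r.toNat, qint (m - (i : ℤ))) / qfact r.toNat

/-- The double sum `J₁` of the paper (for parameters `b`, `w₁`, `w₂`). -/
def J1 (b : ℤ) (w1 w2 : ℕ) : RatFunc ℚ :=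
  ∑ x ∈ Finset.range (w1 + 1), ∑ y ∈ Finset.range (w2 + 1),
    (-1 : RatFunc ℚ) ^ (x + y) * v ^ (((w1 : ℤ) + (w2 : ℤ) - 1) * ((x : ℤ) - (y : ℤ))) *
      qbinom b (x : ℤ) * qbinom b (y : ℤ) *
      qbinom (b - (w2 : ℤ) - (x : ℤ)) ((w1 : ℤ) - (x : ℤ)) *
      qbinom (b - (w1 : ℤ) - (y : ℤ)) ((w2 : ℤ) - (y : ℤ))

/-- The double sum `J₂`, with `[b choose x][b choose y]` replaced by
`[b choose x−1][b choose y−1]`. -/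
def J2 (b : ℤ) (w1 w2 : ℕ) : RatFunc ℚ :=
  ∑ x ∈ Finset.range (w1 + 1), ∑ y ∈ Finset.range (w2 + 1),
    (-1 : RatFunc ℚ) ^ (x + y) * v ^ (((w1 : ℤ) + (w2 : ℤ) - 1) * ((x : ℤ) - (y : ℤ))) *
      qbinom b ((x : ℤ) - 1) * qbinom b ((y : ℤ) - 1) *
      qbinom (b - (w2 : ℤ) - (x : ℤ)) ((w1 : ℤ) - (x : ℤ)) *
      qbinom (b - (w1 : ℤ) - (y : ℤ)) ((w2 : ℤ) - (y : ℤ))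


lemma v_ne : v ≠ 0 := by simpa [v] using RatFunc.X_ne_zero (K := ℚ)

lemma vpow_ne (a : ℤ) : v ^ a ≠ 0 := zpow_ne_zero a v_ne
lemma vpow_mul (a b : ℤ) : v ^ a * v ^ b = v ^ (a + b) := (zpow_add₀ v_ne a b).symm

lemma vsub_ne : v - v⁻¹ ≠ 0 := by
  intro h
  have hv : v = v⁻¹ := by linear_combination h
  have h2 : v * v = 1 := by
    nth_rewrite 2 [hv]; exact mul_inv_cancel₀ v_ne
  have h3 : (Polynomial.X * Polynomial.X : Polynomial ℚ) = 1 := by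
    apply RatFunc.algebraMap_injective ℚ
    push_cast [map_mul, map_one]
    simpa [v, RatFunc.algebraMap_X] using h2
  have := congrArg (Polynomial.eval 0) h3
  simp at this

lemma vpow_natCast_ne_one (k : ℕ) (hk : 1 ≤ k) : v ^ (k : ℤ) ≠ 1 := by
  intro h
  rw [zpow_natCast] at h
  have h3 : (Polynomial.X ^ k : Polynomial ℚ) = 1 := by
    apply RatFunc.algebraMap_injective ℚ
    push_cast [map_pow, map_one]
    simpa [v, RatFunc.algebraMap_X] using h
  have := congrArg (Polynomial.eval 0) h3
  simp [Polynomial.eval_pow, zero_pow (by omega : k ≠ 0)] at this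

lemma qint_ne_zero (r : ℤ) (hr : 1 ≤ r) : qint r ≠ 0 := by
  rw [qint, div_ne_zero_iff]
  refine ⟨?_, vsub_ne⟩
  intro h
  have h1 : v ^ r = v ^ (-r) := by linear_combination h
  have h2 : v ^ (2 * r) = 1 := by
    have := congrArg (· * v ^ r) h1
    simp only [vpow_mul] at this
    simpa [show -r + r = 0 by ring, show r + r = 2 * r by ring] using this
  have := vpow_natCast_ne_one (2 * r).toNat (by omega)
  rw [Int.toNat_of_nonneg (by omega)] at this
  exact this h2

lemma qfact_ne_zero (n : ℕ) : qfact n ≠ 0 := by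
  rw [qfact]
  exact Finset.prod_ne_zero_iff.mpr fun i _ => qint_ne_zero _ (by omega)

lemma qint_zero : qint 0 = 0 := by simp [qint]

lemma qint_pascal1 (m r : ℤ) :
    qint m = v ^ (-r) * qint (m - r) + v ^ (m - r) * qint r := by
  rw [qint, qint, qint, ← mul_div_assoc, ← mul_div_assoc, ← add_div]
  congr 1
  rw [mul_sub, mul_sub, vpow_mul, vpow_mul, vpow_mul, vpow_mul,
    show -r + (m - r) = m - 2*r by ring, show -r + -(m - r) = -m by ring,
    show m - r + r = m by ring, show m - r + -r = m - 2*r by ring]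
  ring

lemma qint_pascal2 (m r : ℤ) :
    qint m = v ^ r * qint (m - r) + v ^ (r - m) * qint r := by
  rw [qint, qint, qint, ← mul_div_assoc, ← mul_div_assoc, ← add_div]
  congr 1
  rw [mul_sub, mul_sub, vpow_mul, vpow_mul, vpow_mul, vpow_mul,
    show r + (m - r) = m by ring, show r + -(m - r) = 2*r - m by ring,
    show r - m + r = 2*r - m by ring, show r - m + -r = -m by ring]
  ring

lemma qbinom_natCast (m : ℤ) (r : ℕ) :
    qbinom m (r : ℤ) = (∏ i ∈ Finset.range r, qint (m - (i : ℤ))) / qfact r := by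
  rw [qbinom, if_neg (not_lt.mpr (Int.natCast_nonneg r)), Int.toNat_natCast]

lemma qbinom_zero (m : ℤ) : qbinom m 0 = 1 := by
  rw [show (0:ℤ) = ((0:ℕ):ℤ) by norm_num, qbinom_natCast]
  simp [qfact]

lemma qbinom_neg (m r : ℤ) (h : r < 0) : qbinom m r = 0 := by
  rw [qbinom, if_pos h]

lemma qbinom_eq_zero (m : ℤ) (r : ℕ) (h0 : 0 ≤ m) (h : m < (r:ℤ)) : qbinom m (r:ℤ) = 0 := by
  rw [qbinom_natCast]
  apply div_eq_zero_iff.mpr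
  left
  apply Finset.prod_eq_zero (i := m.toNat) (Finset.mem_range.mpr (by omega))
  rw [Int.toNat_of_nonneg h0, sub_self, qint_zero]

lemma qbinom_pascal1 (m : ℤ) (r : ℕ) :
    qbinom m (r:ℤ) = v ^ (-(r:ℤ)) * qbinom (m-1) (r:ℤ)
      + v ^ (m - (r:ℤ)) * qbinom (m-1) ((r:ℤ)-1) := by
  cases r with
  | zero => simp [qbinom_zero, qbinom_neg (m-1) (-1) (by norm_num)]
  | succ s =>
    have hs1 : ((s+1:ℕ):ℤ) = (s:ℤ)+1 := by push_cast; ring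
    have hc : ((s+1:ℕ):ℤ) - 1 = ((s:ℕ):ℤ) := by push_cast; ring
    rw [hc, qbinom_natCast, qbinom_natCast, qbinom_natCast]
    have hprod1 : (∏ i ∈ Finset.range (s+1), qint (m - (i:ℤ)))
        = (∏ i ∈ Finset.range s, qint (m - 1 - (i:ℤ))) * qint m := by
      rw [Finset.prod_range_succ']
      congr 1
      · apply Finset.prod_congr rfl; intro i _; congr 1; push_cast; ring
      · congr 1; push_cast; ring
    have hprod2 : (∏ i ∈ Finset.range (s+1), qint (m - 1 - (i:ℤ)))
        = (∏ i ∈ Finset.range s, qint (m - 1 - (i:ℤ))) * qint (m - ((s+1:ℕ):ℤ)) := by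
      rw [Finset.prod_range_succ]; congr 2; push_cast; ring
    have hfact : qfact (s+1) = qfact s * qint ((s:ℤ)+1) := by
      rw [qfact, qfact, Finset.prod_range_succ]
    have h1 : qfact s ≠ 0 := qfact_ne_zero s
    have h2 : qint ((s:ℤ)+1) ≠ 0 := qint_ne_zero _ (by omega)
    have h3 : (v - v⁻¹) ≠ 0 := vsub_ne
    rw [hprod1, hprod2, hfact, qint_pascal1 m ((s+1:ℕ):ℤ), hs1]
    field_simp

lemma qbinom_pascal2 (m : ℤ) (r : ℕ) :
    qbinom m (r:ℤ) = v ^ ((r:ℤ)) * qbinom (m-1) (r:ℤ)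
      + v ^ ((r:ℤ) - m) * qbinom (m-1) ((r:ℤ)-1) := by
  cases r with
  | zero => simp [qbinom_zero, qbinom_neg (m-1) (-1) (by norm_num)]
  | succ s =>
    have hs1 : ((s+1:ℕ):ℤ) = (s:ℤ)+1 := by push_cast; ring
    have hc : ((s+1:ℕ):ℤ) - 1 = ((s:ℕ):ℤ) := by push_cast; ring
    rw [hc, qbinom_natCast, qbinom_natCast, qbinom_natCast]
    have hprod1 : (∏ i ∈ Finset.range (s+1), qint (m - (i:ℤ)))
        = (∏ i ∈ Finset.range s, qint (m - 1 - (i:ℤ))) * qint m := by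
      rw [Finset.prod_range_succ']
      congr 1
      · apply Finset.prod_congr rfl; intro i _; congr 1; push_cast; ring
      · congr 1; push_cast; ring
    have hprod2 : (∏ i ∈ Finset.range (s+1), qint (m - 1 - (i:ℤ)))
        = (∏ i ∈ Finset.range s, qint (m - 1 - (i:ℤ))) * qint (m - ((s+1:ℕ):ℤ)) := by
      rw [Finset.prod_range_succ]; congr 2; push_cast; ring
    have hfact : qfact (s+1) = qfact s * qint ((s:ℤ)+1) := by
      rw [qfact, qfact, Finset.prod_range_succ]
    have h1 : qfact s ≠ 0 := qfact_ne_zero s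
    have h2 : qint ((s:ℤ)+1) ≠ 0 := qint_ne_zero _ (by omega)
    have h3 : (v - v⁻¹) ≠ 0 := vsub_ne
    rw [hprod1, hprod2, hfact, qint_pascal2 m ((s+1:ℕ):ℤ), hs1]
    field_simp

lemma qbinom_mul (b : ℤ) (x d : ℕ) :
    qbinom b (x:ℤ) * qbinom (b - (x:ℤ)) (d:ℤ)
      = qbinom b ((x+d:ℕ):ℤ) * qbinom ((x+d:ℕ):ℤ) (x:ℤ) := by
  rw [qbinom_natCast, qbinom_natCast, qbinom_natCast, qbinom_natCast]
  have hA : ∏ i ∈ Finset.range (x+d), qint (b - (i:ℤ))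
      = (∏ i ∈ Finset.range x, qint (b - (i:ℤ))) * (∏ i ∈ Finset.range d, qint (b - (x:ℤ) - (i:ℤ))) := by
    rw [Finset.prod_range_add]
    congr 1
    apply Finset.prod_congr rfl; intro i _; congr 1; push_cast; ring
  have hB : qfact (x+d) = qfact d * ∏ i ∈ Finset.range x, qint (((x+d:ℕ):ℤ) - (i:ℤ)) := by
    have hrefl : ∏ i ∈ Finset.range x, qint (((x+d:ℕ):ℤ) - (i:ℤ))
        = ∏ i ∈ Finset.range x, qint ((d:ℤ) + (i:ℤ) + 1) := by
      rw [← Finset.prod_range_reflect (fun j => qint ((d:ℤ) + (j:ℤ) + 1)) x]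
      apply Finset.prod_congr rfl; intro j hj
      have hjx := Finset.mem_range.mp hj
      have hcast : ((x-1-j:ℕ):ℤ) = (x:ℤ)-1-(j:ℤ) := by omega
      simp only [hcast]
      congr 1; push_cast; ring
    rw [hrefl, qfact, qfact, add_comm x d, Finset.prod_range_add]
    push_cast
    ring
  rw [hA, hB]
  have h1 := qfact_ne_zero x
  have h2 := qfact_ne_zero d
  have h3 : (∏ i ∈ Finset.range x, qint ((x:ℤ) + (d:ℤ) - (i:ℤ))) ≠ 0 :=
    Finset.prod_ne_zero_iff.mpr fun i hi =>
      qint_ne_zero _ (by have := Finset.mem_range.mp hi; omega)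
  push_cast
  field_simp

lemma altsum2 (n : ℕ) (hn : 1 ≤ n) :
    ∑ x ∈ Finset.range (n+1),
      (-1:RatFunc ℚ)^x * v ^ (((n:ℤ)-1)*(x:ℤ)) * qbinom (n:ℤ) (x:ℤ) = 0 := by
  have hsplit : ∀ x : ℕ, (-1:RatFunc ℚ)^x * v ^ (((n:ℤ)-1)*(x:ℤ)) * qbinom (n:ℤ) (x:ℤ)
      = (-1:RatFunc ℚ)^x * v ^ ((n:ℤ)*(x:ℤ)) * qbinom ((n:ℤ)-1) (x:ℤ)
        + (-1:RatFunc ℚ)^x * v ^ ((n:ℤ)*(x:ℤ) - (n:ℤ)) * qbinom ((n:ℤ)-1) ((x:ℤ)-1) := by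
    intro x
    rw [qbinom_pascal2 (n:ℤ) x, mul_add]
    congr 1
    · rw [show (n:ℤ)*(x:ℤ) = ((n:ℤ)-1)*(x:ℤ) + (x:ℤ) by ring, ← vpow_mul]; ring
    · rw [show (n:ℤ)*(x:ℤ) - (n:ℤ) = ((n:ℤ)-1)*(x:ℤ) + ((x:ℤ)-(n:ℤ)) by ring, ← vpow_mul]; ring
  simp only [hsplit]
  rw [Finset.sum_add_distrib]
  have h1 : ∑ x ∈ Finset.range (n+1),
        (-1:RatFunc ℚ)^x * v ^ ((n:ℤ)*(x:ℤ)) * qbinom ((n:ℤ)-1) (x:ℤ)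
      = ∑ x ∈ Finset.range n,
        (-1:RatFunc ℚ)^x * v ^ ((n:ℤ)*(x:ℤ)) * qbinom ((n:ℤ)-1) (x:ℤ) := by
    rw [Finset.sum_range_succ, qbinom_eq_zero _ _ (by omega) (by omega)]
    ring
  have h2 : ∑ x ∈ Finset.range (n+1),
        (-1:RatFunc ℚ)^x * v ^ ((n:ℤ)*(x:ℤ) - (n:ℤ)) * qbinom ((n:ℤ)-1) ((x:ℤ)-1)
      = -∑ x ∈ Finset.range n,
        (-1:RatFunc ℚ)^x * v ^ ((n:ℤ)*(x:ℤ)) * qbinom ((n:ℤ)-1) (x:ℤ) := by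
    rw [Finset.sum_range_succ']
    have hz : ((-1:RatFunc ℚ))^0 * v ^ ((n:ℤ)*((0:ℕ):ℤ) - (n:ℤ)) * qbinom ((n:ℤ)-1) (((0:ℕ):ℤ)-1) = 0 := by
      rw [qbinom_neg _ _ (by norm_num)]; ring
    rw [hz, add_zero, ← Finset.sum_neg_distrib]
    apply Finset.sum_congr rfl
    intro x _
    have hc : (((x+1:ℕ)):ℤ) = (x:ℤ)+1 := by push_cast; ring
    rw [pow_succ, hc, show (n:ℤ)*((x:ℤ)+1) - (n:ℤ) = (n:ℤ)*(x:ℤ) by ring,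
      show (x:ℤ)+1-1 = (x:ℤ) by ring]
    ring
  rw [h1, h2, add_neg_cancel]

lemma altsum1 (n : ℕ) (hn : 1 ≤ n) :
    ∑ x ∈ Finset.range (n+1),
      (-1:RatFunc ℚ)^x * v ^ (-(((n:ℤ)-1)*(x:ℤ))) * qbinom (n:ℤ) (x:ℤ) = 0 := by
  have hsplit : ∀ x : ℕ, (-1:RatFunc ℚ)^x * v ^ (-(((n:ℤ)-1)*(x:ℤ))) * qbinom (n:ℤ) (x:ℤ)
      = (-1:RatFunc ℚ)^x * v ^ (-((n:ℤ)*(x:ℤ))) * qbinom ((n:ℤ)-1) (x:ℤ)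
        + (-1:RatFunc ℚ)^x * v ^ (-((n:ℤ)*(x:ℤ) - (n:ℤ))) * qbinom ((n:ℤ)-1) ((x:ℤ)-1) := by
    intro x
    rw [qbinom_pascal1 (n:ℤ) x, mul_add]
    congr 1
    · rw [show -((n:ℤ)*(x:ℤ)) = -(((n:ℤ)-1)*(x:ℤ)) + (-(x:ℤ)) by ring, ← vpow_mul]; ring
    · rw [show -((n:ℤ)*(x:ℤ) - (n:ℤ)) = -(((n:ℤ)-1)*(x:ℤ)) + ((n:ℤ)-(x:ℤ)) by ring, ← vpow_mul]; ring
  simp only [hsplit]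
  rw [Finset.sum_add_distrib]
  have h1 : ∑ x ∈ Finset.range (n+1),
        (-1:RatFunc ℚ)^x * v ^ (-((n:ℤ)*(x:ℤ))) * qbinom ((n:ℤ)-1) (x:ℤ)
      = ∑ x ∈ Finset.range n,
        (-1:RatFunc ℚ)^x * v ^ (-((n:ℤ)*(x:ℤ))) * qbinom ((n:ℤ)-1) (x:ℤ) := by
    rw [Finset.sum_range_succ, qbinom_eq_zero _ _ (by omega) (by omega)]
    ring
  have h2 : ∑ x ∈ Finset.range (n+1),
        (-1:RatFunc ℚ)^x * v ^ (-((n:ℤ)*(x:ℤ) - (n:ℤ))) * qbinom ((n:ℤ)-1) ((x:ℤ)-1)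
      = -∑ x ∈ Finset.range n,
        (-1:RatFunc ℚ)^x * v ^ (-((n:ℤ)*(x:ℤ))) * qbinom ((n:ℤ)-1) (x:ℤ) := by
    rw [Finset.sum_range_succ']
    have hz : ((-1:RatFunc ℚ))^0 * v ^ (-((n:ℤ)*((0:ℕ):ℤ) - (n:ℤ))) * qbinom ((n:ℤ)-1) (((0:ℕ):ℤ)-1) = 0 := by
      rw [qbinom_neg _ _ (by norm_num)]; ring
    rw [hz, add_zero, ← Finset.sum_neg_distrib]
    apply Finset.sum_congr rfl
    intro x _
    have hc : (((x+1:ℕ)):ℤ) = (x:ℤ)+1 := by push_cast; ring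
    rw [pow_succ, hc, show -((n:ℤ)*((x:ℤ)+1) - (n:ℤ)) = -((n:ℤ)*(x:ℤ)) by ring,
      show (x:ℤ)+1-1 = (x:ℤ) by ring]
    ring
  rw [h1, h2, add_neg_cancel]

def Tsum (b : ℤ) (n c : ℕ) : RatFunc ℚ :=
  ∑ x ∈ Finset.range (n+1), (-1:RatFunc ℚ)^x * v ^ (((n:ℤ)+(c:ℤ)-1)*(x:ℤ))
    * qbinom b (x:ℤ) * qbinom (b - (c:ℤ) - (x:ℤ)) ((n:ℤ)-(x:ℤ))

def Usum (b : ℤ) (n c : ℕ) : RatFunc ℚ :=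
  ∑ x ∈ Finset.range (n+1), (-1:RatFunc ℚ)^x * v ^ (-(((n:ℤ)+(c:ℤ)-1)*(x:ℤ)))
    * qbinom b (x:ℤ) * qbinom (b - (c:ℤ) - (x:ℤ)) ((n:ℤ)-(x:ℤ))

lemma shuffle (E1 E2 E3 E4 : ℤ) (h : E1 + E2 = E3 + E4) (A B C : RatFunc ℚ) :
    A * v ^ E1 * B * (v ^ E2 * C) = v ^ E3 * (A * v ^ E4 * B * C) := by
  have hv : v ^ E1 * v ^ E2 = v ^ E3 * v ^ E4 := by rw [vpow_mul, vpow_mul, h]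
  linear_combination (A * B * C) * hv

lemma Tsum_base (b : ℤ) (n : ℕ) (hn : 1 ≤ n) : Tsum b n 0 = 0 := by
  have key : Tsum b n 0 = qbinom b (n:ℤ) * ∑ x ∈ Finset.range (n+1),
      (-1:RatFunc ℚ)^x * v ^ (((n:ℤ)-1)*(x:ℤ)) * qbinom (n:ℤ) (x:ℤ) := by
    rw [Tsum, Finset.mul_sum]
    apply Finset.sum_congr rfl
    intro x hx
    have hxn : x ≤ n := by have := Finset.mem_range.mp hx; omega
    have e1 : b - ((0:ℕ):ℤ) - (x:ℤ) = b - (x:ℤ) := by push_cast; ring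
    have e2 : (n:ℤ) - (x:ℤ) = ((n - x:ℕ):ℤ) := by omega
    have e4 : (n:ℤ) + ((0:ℕ):ℤ) - 1 = (n:ℤ) - 1 := by push_cast; ring
    have e3 : ((x + (n - x):ℕ):ℤ) = (n:ℤ) := by omega
    rw [e1, e2, e4,
      mul_assoc ((-1:RatFunc ℚ)^x * v ^ (((n:ℤ)-1)*(x:ℤ))) (qbinom b (x:ℤ)) _,
      qbinom_mul b x (n-x), e3]
    ring
  rw [key, altsum2 n hn, mul_zero]

lemma Usum_base (b : ℤ) (n : ℕ) (hn : 1 ≤ n) : Usum b n 0 = 0 := by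
  have key : Usum b n 0 = qbinom b (n:ℤ) * ∑ x ∈ Finset.range (n+1),
      (-1:RatFunc ℚ)^x * v ^ (-(((n:ℤ)-1)*(x:ℤ))) * qbinom (n:ℤ) (x:ℤ) := by
    rw [Usum, Finset.mul_sum]
    apply Finset.sum_congr rfl
    intro x hx
    have hxn : x ≤ n := by have := Finset.mem_range.mp hx; omega
    have e1 : b - ((0:ℕ):ℤ) - (x:ℤ) = b - (x:ℤ) := by push_cast; ring
    have e2 : (n:ℤ) - (x:ℤ) = ((n - x:ℕ):ℤ) := by omega
    have e4 : -(((n:ℤ) + ((0:ℕ):ℤ) - 1)*(x:ℤ)) = -(((n:ℤ)-1)*(x:ℤ)) := by push_cast; ring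
    have e3 : ((x + (n - x):ℕ):ℤ) = (n:ℤ) := by omega
    rw [e1, e2, e4,
      mul_assoc ((-1:RatFunc ℚ)^x * v ^ (-(((n:ℤ)-1)*(x:ℤ)))) (qbinom b (x:ℤ)) _,
      qbinom_mul b x (n-x), e3]
    ring
  rw [key, altsum1 n hn, mul_zero]

lemma Tsum_rec (b : ℤ) (n c : ℕ) :
    Tsum b (n+1) c = v ^ (-((n:ℤ)+1)) * Tsum b (n+1) (c+1)
      + v ^ (b - (c:ℤ) - ((n:ℤ)+1)) * Tsum b n (c+1) := by
  have hsplit : ∀ x ∈ Finset.range (n+1+1),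
      (-1:RatFunc ℚ)^x * v ^ ((((n+1:ℕ):ℤ)+(c:ℤ)-1)*(x:ℤ)) * qbinom b (x:ℤ)
        * qbinom (b - (c:ℤ) - (x:ℤ)) (((n+1:ℕ):ℤ)-(x:ℤ))
      = v ^ (-((n:ℤ)+1)) * ((-1:RatFunc ℚ)^x * v ^ ((((n+1:ℕ):ℤ)+((c+1:ℕ):ℤ)-1)*(x:ℤ)) * qbinom b (x:ℤ)
          * qbinom (b - ((c+1:ℕ):ℤ) - (x:ℤ)) (((n+1:ℕ):ℤ)-(x:ℤ)))
        + v ^ (b - (c:ℤ) - ((n:ℤ)+1)) * ((-1:RatFunc ℚ)^x * v ^ (((n:ℤ)+((c+1:ℕ):ℤ)-1)*(x:ℤ)) * qbinom b (x:ℤ)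
          * qbinom (b - ((c+1:ℕ):ℤ) - (x:ℤ)) ((n:ℤ)-(x:ℤ))) := by
    intro x hx
    have hxn : x ≤ n+1 := by have := Finset.mem_range.mp hx; omega
    have e2 : ((n+1:ℕ):ℤ) - (x:ℤ) = ((n+1-x:ℕ):ℤ) := by omega
    rw [e2, qbinom_pascal1 (b - (c:ℤ) - (x:ℤ)) (n+1-x)]
    have eB : ((n+1-x:ℕ):ℤ) = (n:ℤ)+1-(x:ℤ) := by omega
    rw [eB,
      show b - (c:ℤ) - (x:ℤ) - 1 = b - ((c+1:ℕ):ℤ) - (x:ℤ) by push_cast; ring,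
      show (n:ℤ)+1-(x:ℤ)-1 = (n:ℤ)-(x:ℤ) by ring,
      show b - (c:ℤ) - (x:ℤ) - ((n:ℤ)+1-(x:ℤ)) = b - (c:ℤ) - ((n:ℤ)+1) by ring,
      mul_add]
    congr 1
    · rw [show (n:ℤ)+1-(x:ℤ) = ((n+1:ℕ):ℤ)-(x:ℤ) by push_cast; ring]
      apply shuffle _ _ _ _ (by push_cast; ring)
    · apply shuffle _ _ _ _ (by push_cast; ring)
  rw [Tsum, Finset.sum_congr rfl hsplit, Finset.sum_add_distrib,
    ← Finset.mul_sum, ← Finset.mul_sum]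
  have hlast : (∑ i ∈ Finset.range (n+1+1), (-1:RatFunc ℚ)^i * v ^ (((n:ℤ)+((c+1:ℕ):ℤ)-1)*(i:ℤ))
        * qbinom b (i:ℤ) * qbinom (b - ((c+1:ℕ):ℤ) - (i:ℤ)) ((n:ℤ)-(i:ℤ)))
      = Tsum b n (c+1) := by
    rw [Tsum, Finset.sum_range_succ,
      show (n:ℤ) - ((n+1:ℕ):ℤ) = -1 by push_cast; ring,
      qbinom_neg (b - ((c+1:ℕ):ℤ) - ((n+1:ℕ):ℤ)) (-1) (by norm_num)]
    ring
  rw [hlast]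
  have : Tsum b (n+1) (c+1) = ∑ i ∈ Finset.range (n+1+1), (-1:RatFunc ℚ)^i * v ^ ((((n+1:ℕ):ℤ)+((c+1:ℕ):ℤ)-1)*(i:ℤ))
        * qbinom b (i:ℤ) * qbinom (b - ((c+1:ℕ):ℤ) - (i:ℤ)) (((n+1:ℕ):ℤ)-(i:ℤ)) := by
    rw [Tsum]
  rw [this]

lemma Usum_rec (b : ℤ) (n c : ℕ) :
    Usum b (n+1) c = v ^ ((n:ℤ)+1) * Usum b (n+1) (c+1)
      + v ^ ((n:ℤ)+1+(c:ℤ)-b) * Usum b n (c+1) := by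
  have hsplit : ∀ x ∈ Finset.range (n+1+1),
      (-1:RatFunc ℚ)^x * v ^ (-((((n+1:ℕ):ℤ)+(c:ℤ)-1)*(x:ℤ))) * qbinom b (x:ℤ)
        * qbinom (b - (c:ℤ) - (x:ℤ)) (((n+1:ℕ):ℤ)-(x:ℤ))
      = v ^ ((n:ℤ)+1) * ((-1:RatFunc ℚ)^x * v ^ (-((((n+1:ℕ):ℤ)+((c+1:ℕ):ℤ)-1)*(x:ℤ))) * qbinom b (x:ℤ)
          * qbinom (b - ((c+1:ℕ):ℤ) - (x:ℤ)) (((n+1:ℕ):ℤ)-(x:ℤ)))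
        + v ^ ((n:ℤ)+1+(c:ℤ)-b) * ((-1:RatFunc ℚ)^x * v ^ (-(((n:ℤ)+((c+1:ℕ):ℤ)-1)*(x:ℤ))) * qbinom b (x:ℤ)
          * qbinom (b - ((c+1:ℕ):ℤ) - (x:ℤ)) ((n:ℤ)-(x:ℤ))) := by
    intro x hx
    have hxn : x ≤ n+1 := by have := Finset.mem_range.mp hx; omega
    have e2 : ((n+1:ℕ):ℤ) - (x:ℤ) = ((n+1-x:ℕ):ℤ) := by omega
    rw [e2, qbinom_pascal2 (b - (c:ℤ) - (x:ℤ)) (n+1-x)]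
    have eB : ((n+1-x:ℕ):ℤ) = (n:ℤ)+1-(x:ℤ) := by omega
    rw [eB,
      show b - (c:ℤ) - (x:ℤ) - 1 = b - ((c+1:ℕ):ℤ) - (x:ℤ) by push_cast; ring,
      show (n:ℤ)+1-(x:ℤ)-1 = (n:ℤ)-(x:ℤ) by ring,
      show (n:ℤ)+1-(x:ℤ) - (b - (c:ℤ) - (x:ℤ)) = (n:ℤ)+1+(c:ℤ)-b by ring,
      mul_add]
    congr 1
    · rw [show (n:ℤ)+1-(x:ℤ) = ((n+1:ℕ):ℤ)-(x:ℤ) by push_cast; ring]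
      apply shuffle _ _ _ _ (by push_cast; ring)
    · apply shuffle _ _ _ _ (by push_cast; ring)
  rw [Usum, Finset.sum_congr rfl hsplit, Finset.sum_add_distrib,
    ← Finset.mul_sum, ← Finset.mul_sum]
  have hlast : (∑ i ∈ Finset.range (n+1+1), (-1:RatFunc ℚ)^i * v ^ (-(((n:ℤ)+((c+1:ℕ):ℤ)-1)*(i:ℤ)))
        * qbinom b (i:ℤ) * qbinom (b - ((c+1:ℕ):ℤ) - (i:ℤ)) ((n:ℤ)-(i:ℤ)))
      = Usum b n (c+1) := by
    rw [Usum, Finset.sum_range_succ,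
      show (n:ℤ) - ((n+1:ℕ):ℤ) = -1 by push_cast; ring,
      qbinom_neg (b - ((c+1:ℕ):ℤ) - ((n+1:ℕ):ℤ)) (-1) (by norm_num)]
    ring
  rw [hlast]
  have : Usum b (n+1) (c+1) = ∑ i ∈ Finset.range (n+1+1), (-1:RatFunc ℚ)^i * v ^ (-((((n+1:ℕ):ℤ)+((c+1:ℕ):ℤ)-1)*(i:ℤ)))
        * qbinom b (i:ℤ) * qbinom (b - ((c+1:ℕ):ℤ) - (i:ℤ)) (((n+1:ℕ):ℤ)-(i:ℤ)) := by
    rw [Usum]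
  rw [this]

lemma Tsum_eval (n : ℕ) : ∀ (c : ℕ) (b : ℤ),
    Tsum b n c = (-1:RatFunc ℚ)^n * v ^ (b * (n:ℤ)) * qbinom ((n:ℤ)+(c:ℤ)-1) (n:ℤ) := by
  induction n with
  | zero =>
    intro c b
    simp [Tsum, qbinom_zero]
  | succ n ih =>
    intro c
    induction c with
    | zero =>
      intro b
      rw [Tsum_base b (n+1) (by omega),
        show ((n+1:ℕ):ℤ) + ((0:ℕ):ℤ) - 1 = ((n:ℕ):ℤ) by push_cast; ring,
        qbinom_eq_zero (n:ℤ) (n+1) (by positivity) (by push_cast; omega)]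
      ring
    | succ c ihc =>
      intro b
      have hrec := Tsum_rec b n c
      rw [ihc b, ih (c+1) b] at hrec
      have hv1 : v ^ ((n:ℤ)+1) * v ^ (-((n:ℤ)+1)) = 1 := by
        rw [vpow_mul, add_neg_cancel, zpow_zero]
      have hA : v ^ ((n:ℤ)+1) * v ^ (b-(c:ℤ)-((n:ℤ)+1)) * v ^ (b*(n:ℤ))
          = v ^ (b*((n:ℤ)+1)) * v ^ (-(c:ℤ)) := by
        rw [vpow_mul, vpow_mul, vpow_mul]; congr 1; ring
      have hp := qbinom_pascal2 ((n:ℤ)+(c:ℤ)+1) (n+1)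
      push_cast at hrec hp ⊢
      rw [show (n:ℤ)+(c:ℤ)+1-1 = (n:ℤ)+(c:ℤ) by ring,
        show (n:ℤ)+1-((n:ℤ)+(c:ℤ)+1) = -(c:ℤ) by ring,
        show (n:ℤ)+1-1 = (n:ℤ) by ring] at hp
      rw [show (n:ℤ)+1+(c:ℤ)-1 = (n:ℤ)+(c:ℤ) by ring,
        show (n:ℤ)+((c:ℤ)+1)-1 = (n:ℤ)+(c:ℤ) by ring] at hrec
      rw [show (n:ℤ)+1+((c:ℤ)+1)-1 = (n:ℤ)+(c:ℤ)+1 by ring, hp]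
      linear_combination (-(v ^ ((n:ℤ)+1))) * hrec
        + (-(Tsum b (n+1) (c+1))) * hv1
        + (-((-1:RatFunc ℚ)^n * qbinom ((n:ℤ)+(c:ℤ)) (n:ℤ))) * hA

lemma Usum_eval (n : ℕ) : ∀ (c : ℕ) (b : ℤ),
    Usum b n c = (-1:RatFunc ℚ)^n * v ^ (-(b * (n:ℤ))) * qbinom ((n:ℤ)+(c:ℤ)-1) (n:ℤ) := by
  induction n with
  | zero =>
    intro c b
    simp [Usum, qbinom_zero]
  | succ n ih =>
    intro c
    induction c with
    | zero =>
      intro b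
      rw [Usum_base b (n+1) (by omega),
        show ((n+1:ℕ):ℤ) + ((0:ℕ):ℤ) - 1 = ((n:ℕ):ℤ) by push_cast; ring,
        qbinom_eq_zero (n:ℤ) (n+1) (by positivity) (by push_cast; omega)]
      ring
    | succ c ihc =>
      intro b
      have hrec := Usum_rec b n c
      rw [ihc b, ih (c+1) b] at hrec
      have hv1 : v ^ (-((n:ℤ)+1)) * v ^ ((n:ℤ)+1) = 1 := by
        rw [vpow_mul, neg_add_cancel, zpow_zero]
      have hA : v ^ (-((n:ℤ)+1)) * v ^ ((n:ℤ)+1+(c:ℤ)-b) * v ^ (-(b*(n:ℤ)))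
          = v ^ (-(b*((n:ℤ)+1))) * v ^ ((c:ℤ)) := by
        rw [vpow_mul, vpow_mul, vpow_mul]; congr 1; ring
      have hp := qbinom_pascal1 ((n:ℤ)+(c:ℤ)+1) (n+1)
      push_cast at hrec hp ⊢
      rw [show (n:ℤ)+(c:ℤ)+1-1 = (n:ℤ)+(c:ℤ) by ring,
        show (n:ℤ)+(c:ℤ)+1-((n:ℤ)+1) = (c:ℤ) by ring,
        show (n:ℤ)+1-1 = (n:ℤ) by ring] at hp
      rw [show (n:ℤ)+1+(c:ℤ)-1 = (n:ℤ)+(c:ℤ) by ring,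
        show (n:ℤ)+((c:ℤ)+1)-1 = (n:ℤ)+(c:ℤ) by ring] at hrec
      rw [show (n:ℤ)+1+((c:ℤ)+1)-1 = (n:ℤ)+(c:ℤ)+1 by ring, hp]
      linear_combination (-(v ^ (-((n:ℤ)+1)))) * hrec
        + (-(Usum b (n+1) (c+1))) * hv1
        + (-((-1:RatFunc ℚ)^n * qbinom ((n:ℤ)+(c:ℤ)) (n:ℤ))) * hA

lemma J1_factor (b : ℤ) (w1 w2 : ℕ) : J1 b w1 w2 = Tsum b w1 w2 * Usum b w2 w1 := by
  rw [J1, Tsum, Usum, Finset.sum_mul_sum]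
  apply Finset.sum_congr rfl
  intro x _
  apply Finset.sum_congr rfl
  intro y _
  rw [pow_add]
  have hv : v ^ (((w1:ℤ)+(w2:ℤ)-1)*((x:ℤ)-(y:ℤ)))
      = v ^ (((w1:ℤ)+(w2:ℤ)-1)*(x:ℤ)) * v ^ (-(((w2:ℤ)+(w1:ℤ)-1)*(y:ℤ))) := by
    rw [vpow_mul]; congr 1; ring
  rw [hv]
  ring
/-- for 0 < w1 + w2 <= b (with b >= 1),
J1 = (-1)^(w1+w2) v^(b(w1-w2)) [w1+w2-1 choose w1][w1+w2-1 choose w2]. -/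
theorem J1_eval (b : ℤ) (hb : 1 ≤ b) (w1 w2 : ℕ) (hpos : 0 < w1 + w2)
    (hle : (w1 : ℤ) + (w2 : ℤ) ≤ b) :
    J1 b w1 w2
      = (-1 : RatFunc ℚ) ^ (w1 + w2) * v ^ (b * ((w1 : ℤ) - (w2 : ℤ))) *
          qbinom ((w1 : ℤ) + (w2 : ℤ) - 1) (w1 : ℤ) *
          qbinom ((w1 : ℤ) + (w2 : ℤ) - 1) (w2 : ℤ) := by
  rw [J1_factor, Tsum_eval w1 w2 b, Usum_eval w2 w1 b,
    show (w2:ℤ)+(w1:ℤ)-1 = (w1:ℤ)+(w2:ℤ)-1 by ring, pow_add]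
  have hv : v ^ (b*(w1:ℤ)) * v ^ (-(b*(w2:ℤ))) = v ^ (b*((w1:ℤ)-(w2:ℤ))) := by
    rw [vpow_mul]; congr 1; ring
  linear_combination ((-1:RatFunc ℚ)^w1 * (-1:RatFunc ℚ)^w2
    * qbinom ((w1:ℤ)+(w2:ℤ)-1) (w1:ℤ) * qbinom ((w1:ℤ)+(w2:ℤ)-1) (w2:ℤ)) * hv
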